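/- Let η ∈ L²((0,1), r^{d-1}dr) with Jacobi coefficients a_k(η) = ∫_0^1 η(r) P_k(r) r^{d-1} dr, and define for ℓ ≥ 1 the eigenvalue λ_ℓ(η) = ∑_{k=0}^{2ℓ-2} (-1)^{k+1} a_k(η) · √(2k+d)/ℓ · (2ℓ-2+d)!(2ℓ-2)! / ((2ℓ-2+d+k)!(2ℓ-2-k)!). Then λ_ℓ(η) = -((2ℓ+d-2)/ℓ) · ∫_0^1 η(r) r^{2ℓ-2} r^{d-1} dr. -/

import Mathlib

open MeasureTheory Finset

/-- The shifted normalized Jacobi polynomials from the paper. -/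
noncomputable def jacobiP (d k : ℕ) (r : ℝ) : ℝ :=
  Real.sqrt (2 * k + d) *
    ∑ q ∈ Finset.range (k + 1),
      (-1 : ℝ) ^ q * (Nat.choose k q : ℝ) * (Nat.choose (k + q + d - 1) k : ℝ) * r ^ q

/-- The weighted Lebesgue measure `r^{d-1} dr` on `(0,1)`. -/
noncomputable def radialMeasure (d : ℕ) : Measure ℝ :=
  (volume.restrict (Set.Ioo (0:ℝ) 1)).withDensity fun r => ENNReal.ofReal (r ^ (d - 1))

/-- The Jacobi coefficients `a_k(η) = ∫_0^1 η(r) P_k(r) r^{d-1} dr`. -/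
noncomputable def jacobiCoeff (d : ℕ) (η : ℝ → ℂ) (k : ℕ) : ℂ :=
  ∫ r in Set.Ioo (0:ℝ) 1, η r * (jacobiP d k r : ℂ) * (r : ℂ) ^ (d - 1)

lemma step (e p i a : ℕ) :
    ((i : ℝ) + a) * ((-1)^i * (2*p+2*i+e+1) * (2*p+i+e).factorial /
        ((i.factorial : ℝ) * (2*p+e+2*i+a+1).factorial * a.factorial))
    = (-1)^i * i * (a+1) * (2*p+i+e).factorial /
        ((i.factorial : ℝ) * (2*p+e+2*i+a).factorial * (a+1).factorial)
      - (-1)^(i+1) * (i+1) * a * (2*p+i+e+1).factorial /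
        (((i+1).factorial : ℝ) * (2*p+e+2*i+a+1).factorial * a.factorial) := by
  rw [show 2*p+e+2*i+a+1 = (2*p+e+2*i+a)+1 from rfl, show 2*p+i+e+1 = (2*p+i+e)+1 from rfl,
    Nat.factorial_succ (2*p+e+2*i+a), Nat.factorial_succ (2*p+i+e), Nat.factorial_succ i,
    Nat.factorial_succ a]
  have h1 : (i.factorial : ℝ) ≠ 0 := Nat.cast_ne_zero.2 (Nat.factorial_ne_zero i)
  have h2 : (a.factorial : ℝ) ≠ 0 := Nat.cast_ne_zero.2 (Nat.factorial_ne_zero a)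
  have h3 : ((2*p+e+2*i+a).factorial : ℝ) ≠ 0 := Nat.cast_ne_zero.2 (Nat.factorial_ne_zero _)
  have h4 : ((2*p+e+2*i+a : ℕ) : ℝ) + 1 ≠ 0 := by positivity
  have h5 : ((i:ℝ) + 1) ≠ 0 := by positivity
  have h6 : ((a:ℝ) + 1) ≠ 0 := by positivity
  push_cast
  field_simp
  ring

lemma lemA (e p n : ℕ) :
    ∑ i ∈ Finset.range (n+2), ((-1:ℝ)^i * (2*p+2*i+e+1) * ((2*p+i+e).factorial : ℝ) /
      ((i.factorial : ℝ) * ((2*p+n+e+2+i).factorial : ℝ) * ((n+1-i).factorial : ℝ))) = 0 := by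
  set T : ℕ → ℝ := fun j => (-1)^j * j * (n+2-j) * ((2*p+j+e).factorial : ℝ) /
    ((j.factorial : ℝ) * ((2*p+n+e+1+j).factorial : ℝ) * ((n+2-j).factorial : ℝ)) with hT
  have key : ((n:ℝ)+1) * ∑ i ∈ Finset.range (n+2), ((-1:ℝ)^i * (2*p+2*i+e+1) * ((2*p+i+e).factorial : ℝ) /
      ((i.factorial : ℝ) * ((2*p+n+e+2+i).factorial : ℝ) * ((n+1-i).factorial : ℝ))) = 0 := by
    rw [Finset.mul_sum]
    have : ∀ i ∈ Finset.range (n+2),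
        ((n:ℝ)+1) * ((-1:ℝ)^i * (2*p+2*i+e+1) * ((2*p+i+e).factorial : ℝ) /
          ((i.factorial : ℝ) * ((2*p+n+e+2+i).factorial : ℝ) * ((n+1-i).factorial : ℝ)))
        = T i - T (i+1) := by
      intro i hi
      simp only [Finset.mem_range] at hi
      have hile : i ≤ n + 1 := by omega
      set a := n + 1 - i with ha
      have e1 : n + 1 - i = a := rfl
      have e2 : n + 2 - i = a + 1 := by omega
      have e3 : n + 2 - (i+1) = a := by omega
      have e4 : 2*p+n+e+2+i = 2*p+e+2*i+a+1 := by omega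
      have e5 : 2*p+n+e+1+i = 2*p+e+2*i+a := by omega
      have e6 : 2*p+n+e+1+(i+1) = 2*p+e+2*i+a+1 := by omega
      have e7 : 2*p+(i+1)+e = 2*p+i+e+1 := by omega
      have hna : n + 1 = i + a := by omega
      have e8 : ((n:ℝ)+1) = (i:ℝ) + a := by exact_mod_cast congrArg (Nat.cast : ℕ → ℝ) hna
      have e2' : (n:ℝ)+2-(i:ℝ) = (a:ℝ)+1 := by
        have : ((n:ℝ)+1) = (i:ℝ) + a := e8
        linarith
      have e3' : (n:ℝ)+2-((i:ℝ)+1) = (a:ℝ) := by linarith [e8]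
      rw [hT]
      simp only [e1, e2, e3, e4, e5, e6, e7]
      push_cast
      rw [e8, e2', e3']
      linear_combination step e p i a
    rw [Finset.sum_congr rfl this, Finset.sum_range_sub' T (n+2)]
    have hT0 : T 0 = 0 := by simp [hT]
    have hTn : T (n+2) = 0 := by simp [hT]
    rw [hT0, hTn, sub_zero]
  have hn1 : ((n:ℝ)+1) ≠ 0 := by positivity
  exact (mul_eq_zero.mp key).resolve_left hn1

lemma S_lt (e m p : ℕ) (h : p < m) :
    ∑ q ∈ Finset.Icc p m, ((-1:ℝ)^q * (2*q+e+1) * (((m+e).factorial : ℝ) * (m.factorial : ℝ)) /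
      (((m+e+1+q).factorial : ℝ) * ((m-q).factorial : ℝ))) * (q.choose p) * ((q+p+e).choose q)
      = 0 := by
  obtain ⟨n, rfl⟩ : ∃ n, m = p + n + 1 := ⟨m - p - 1, by omega⟩
  rw [← Finset.Ico_add_one_right_eq_Icc, Finset.sum_Ico_eq_sum_range]
  have hrange : p + n + 1 + 1 - p = n + 2 := by omega
  rw [hrange]
  set m := p + n + 1 with hm
  set K : ℝ := (-1:ℝ)^p * ((m+e).factorial : ℝ) * (m.factorial : ℝ) /
    ((p.factorial : ℝ) * ((p+e).factorial : ℝ)) with hK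
  have main : ∑ i ∈ Finset.range (n+2),
      ((-1:ℝ)^(p+i) * (2*((p+i):ℕ)+e+1) * (((m+e).factorial : ℝ) * (m.factorial : ℝ)) /
        (((m+e+1+(p+i)).factorial : ℝ) * ((m-(p+i)).factorial : ℝ))) * ((p+i).choose p) *
        (((p+i)+p+e).choose (p+i))
      = ∑ i ∈ Finset.range (n+2), K * ((-1:ℝ)^i * (2*p+2*i+e+1) * ((2*p+i+e).factorial : ℝ) /
        ((i.factorial : ℝ) * ((2*p+n+e+2+i).factorial : ℝ) * ((n+1-i).factorial : ℝ))) := by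
    apply Finset.sum_congr rfl
    intro i hi
    have e1 : m + e + 1 + (p+i) = 2*p+n+e+2+i := by omega
    have e2 : m - (p+i) = n+1-i := by omega
    have e3 : (p+i)+p+e = 2*p+i+e := by omega
    rw [e1, e2, e3]
    have hc1 : ((p+i).choose p : ℝ) * (p.factorial : ℝ) * (i.factorial : ℝ)
        = ((p+i).factorial : ℝ) := by
      exact_mod_cast congrArg (Nat.cast : ℕ → ℝ)
        (by simpa using Nat.choose_mul_factorial_mul_factorial (Nat.le_add_right p i) (n := p+i))
    have hc2 : ((2*p+i+e).choose (p+i) : ℝ) * ((p+i).factorial : ℝ) * ((p+e).factorial : ℝ)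
        = ((2*p+i+e).factorial : ℝ) := by
      have h1 : p + i ≤ 2*p+i+e := by omega
      have h2 : 2*p+i+e - (p+i) = p + e := by omega
      have := Nat.choose_mul_factorial_mul_factorial h1
      rw [h2] at this
      exact_mod_cast congrArg (Nat.cast : ℕ → ℝ) this
    have hne : ∀ x : ℕ, (x.factorial : ℝ) ≠ 0 := fun x => Nat.cast_ne_zero.2 x.factorial_ne_zero
    have d1 : ((p+i).choose p : ℝ) = ((p+i).factorial : ℝ)/((p.factorial:ℝ)*(i.factorial:ℝ)) := by
      rw [eq_div_iff (by positivity)]; linear_combination hc1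
    have d2 : ((2*p+i+e).choose (p+i) : ℝ)
        = ((2*p+i+e).factorial : ℝ)/(((p+i).factorial:ℝ)*((p+e).factorial:ℝ)) := by
      rw [eq_div_iff (by positivity)]; linear_combination hc2
    rw [d1, d2, hK, pow_add]
    push_cast
    field_simp
  rw [main, ← Finset.mul_sum, lemA e p n, mul_zero]

lemma S_diag (e m : ℕ) :
    ∑ q ∈ Finset.Icc m m, ((-1:ℝ)^q * (2*q+e+1) * (((m+e).factorial : ℝ) * (m.factorial : ℝ)) /
      (((m+e+1+q).factorial : ℝ) * ((m-q).factorial : ℝ))) * (q.choose m) * ((q+m+e).choose q)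
      = (-1:ℝ)^m := by
  rw [Finset.Icc_self, Finset.sum_singleton]
  have hc : ((m+m+e).choose m : ℝ) * (m.factorial : ℝ) * ((m+e).factorial : ℝ)
      = ((m+m+e).factorial : ℝ) := by
    have h1 : m ≤ m+m+e := by omega
    have h2 : m+m+e - m = m + e := by omega
    have := Nat.choose_mul_factorial_mul_factorial h1
    rw [h2] at this
    exact_mod_cast congrArg (Nat.cast : ℕ → ℝ) this
  have e1 : m + e + 1 + m = (m+m+e)+1 := by omega
  rw [e1, Nat.sub_self, Nat.choose_self, Nat.factorial_zero, Nat.factorial_succ]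
  have hne : ∀ x : ℕ, (x.factorial : ℝ) ≠ 0 := fun x => Nat.cast_ne_zero.2 x.factorial_ne_zero
  have d2 : ((m+m+e).choose m : ℝ)
      = ((m+m+e).factorial : ℝ)/((m.factorial:ℝ)*((m+e).factorial:ℝ)) := by
    rw [eq_div_iff (by positivity)]; linear_combination hc
  rw [d2]
  have hpos : ((m+m+e : ℕ):ℝ) + 1 ≠ 0 := by positivity
  push_cast
  field_simp
  ring

lemma poly_expand (e m : ℕ) (r : ℝ) :
    ∑ q ∈ Finset.range (m+1), ((-1:ℝ)^q * (2*q+e+1) *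
        (((m+e).factorial : ℝ) * (m.factorial : ℝ)) /
        (((m+e+1+q).factorial : ℝ) * ((m-q).factorial : ℝ))) *
      (∑ p ∈ Finset.range (q+1), (-1:ℝ)^p * (q.choose p) * ((q+p+e).choose q) * r^p)
    = r^m := by
  have swap : ∑ q ∈ Finset.range (m+1), ∑ p ∈ Finset.range (q+1),
      (((-1:ℝ)^q * (2*q+e+1) * (((m+e).factorial : ℝ) * (m.factorial : ℝ)) /
        (((m+e+1+q).factorial : ℝ) * ((m-q).factorial : ℝ))) *
        ((-1:ℝ)^p * (q.choose p) * ((q+p+e).choose q) * r^p))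
      = ∑ p ∈ Finset.range (m+1), ∑ q ∈ Finset.Icc p m,
      (((-1:ℝ)^q * (2*q+e+1) * (((m+e).factorial : ℝ) * (m.factorial : ℝ)) /
        (((m+e+1+q).factorial : ℝ) * ((m-q).factorial : ℝ))) *
        ((-1:ℝ)^p * (q.choose p) * ((q+p+e).choose q) * r^p)) := by
    apply Finset.sum_comm'
    intro q p
    simp only [Finset.mem_range, Finset.mem_Icc]
    omega
  calc ∑ q ∈ Finset.range (m+1), ((-1:ℝ)^q * (2*q+e+1) *
        (((m+e).factorial : ℝ) * (m.factorial : ℝ)) /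
        (((m+e+1+q).factorial : ℝ) * ((m-q).factorial : ℝ))) *
      (∑ p ∈ Finset.range (q+1), (-1:ℝ)^p * (q.choose p) * ((q+p+e).choose q) * r^p)
      = ∑ q ∈ Finset.range (m+1), ∑ p ∈ Finset.range (q+1),
      (((-1:ℝ)^q * (2*q+e+1) * (((m+e).factorial : ℝ) * (m.factorial : ℝ)) /
        (((m+e+1+q).factorial : ℝ) * ((m-q).factorial : ℝ))) *
        ((-1:ℝ)^p * (q.choose p) * ((q+p+e).choose q) * r^p)) := by
        exact Finset.sum_congr rfl fun q _ => Finset.mul_sum _ _ _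
    _ = ∑ p ∈ Finset.range (m+1), ∑ q ∈ Finset.Icc p m,
      (((-1:ℝ)^q * (2*q+e+1) * (((m+e).factorial : ℝ) * (m.factorial : ℝ)) /
        (((m+e+1+q).factorial : ℝ) * ((m-q).factorial : ℝ))) *
        ((-1:ℝ)^p * (q.choose p) * ((q+p+e).choose q) * r^p)) := swap
    _ = ∑ p ∈ Finset.range (m+1), ((-1:ℝ)^p * r^p) * ∑ q ∈ Finset.Icc p m,
      (((-1:ℝ)^q * (2*q+e+1) * (((m+e).factorial : ℝ) * (m.factorial : ℝ)) /
        (((m+e+1+q).factorial : ℝ) * ((m-q).factorial : ℝ))) *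
        (q.choose p) * ((q+p+e).choose q)) := by
        refine Finset.sum_congr rfl fun p _ => ?_
        rw [Finset.mul_sum]
        exact Finset.sum_congr rfl fun q _ => by ring
    _ = r^m := by
        rw [Finset.sum_eq_single m]
        · rw [S_diag]
          have : (-1:ℝ)^m * (-1:ℝ)^m = 1 := by
            rw [← pow_add]; exact (neg_one_pow_eq_one_iff_even (by norm_num)).2 ⟨m, by ring⟩
          linear_combination r^m * this
        · intro p hp hpm
          rw [S_lt e m p (by simp at hp; omega), mul_zero]
        · intro hm; simp at hm

lemma jacobi_sum (d : ℕ) (hd : 2 ≤ d) (ℓ : ℕ) (hℓ : 1 ≤ ℓ) (r : ℝ) :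
    ∑ k ∈ Finset.range (2*ℓ-1), ((-1:ℝ)^(k+1) * Real.sqrt (2*k+d) *
      (((2*ℓ-2+d).factorial : ℝ) * ((2*ℓ-2).factorial : ℝ) /
        (((2*ℓ-2+d+k).factorial : ℝ) * ((2*ℓ-2-k).factorial : ℝ)))) * jacobiP d k r
    = -(((2*ℓ+d-2 : ℕ) : ℝ)) * r^(2*ℓ-2) := by
  obtain ⟨e, rfl⟩ : ∃ e, d = e + 1 := ⟨d - 1, by omega⟩
  set m := 2*ℓ-2 with hm
  have hrange : 2*ℓ-1 = m+1 := by omega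
  have hC : (2*ℓ+(e+1)-2 : ℕ) = m+e+1 := by omega
  rw [hrange, hC]
  have main : ∀ k ∈ Finset.range (m+1),
      ((-1:ℝ)^(k+1) * Real.sqrt (2*k+((e+1:ℕ):ℝ)) *
        (((m+(e+1)).factorial : ℝ) * (m.factorial : ℝ) /
          (((m+(e+1)+k).factorial : ℝ) * ((m-k).factorial : ℝ)))) * jacobiP (e+1) k r
      = (-(((m+e+1 : ℕ)) : ℝ)) * (((-1:ℝ)^k * (2*k+e+1) *
          (((m+e).factorial : ℝ) * (m.factorial : ℝ)) /
          (((m+e+1+k).factorial : ℝ) * ((m-k).factorial : ℝ))) *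
        (∑ p ∈ Finset.range (k+1), (-1:ℝ)^p * (k.choose p) * ((k+p+e).choose k) * r^p)) := by
    intro k _
    rw [jacobiP]
    have hidx : ∀ q, k + q + (e+1) - 1 = k + q + e := fun q => by omega
    simp only [hidx]
    have hfact : ((m+(e+1)).factorial : ℝ) = ((m+e+1 : ℕ) : ℝ) * ((m+e).factorial : ℝ) := by
      rw [show m+(e+1) = (m+e)+1 from rfl, Nat.factorial_succ]
      push_cast; ring
    have hidx2 : m+(e+1)+k = m+e+1+k := by omega
    rw [hidx2, hfact]
    set s : ℝ := Real.sqrt (2*k+((e+1:ℕ):ℝ)) with hs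
    have hss : (2*(k:ℝ)+(e:ℝ)+1) = s * s := by
      rw [hs, Real.mul_self_sqrt (by positivity)]
      push_cast; ring
    rw [hss]
    have hne1 : ((m+e+1+k).factorial : ℝ) ≠ 0 := Nat.cast_ne_zero.2 (Nat.factorial_ne_zero _)
    have hne2 : ((m-k).factorial : ℝ) ≠ 0 := Nat.cast_ne_zero.2 (Nat.factorial_ne_zero _)
    field_simp
    ring
  rw [Finset.sum_congr rfl main, ← Finset.mul_sum, poly_expand e m r]

lemma radial_finite (d : ℕ) : IsFiniteMeasure (radialMeasure d) := by
  constructor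
  rw [radialMeasure, withDensity_apply _ MeasurableSet.univ, Measure.restrict_univ]
  have hle : ∫⁻ r in Set.Ioo (0:ℝ) 1, ENNReal.ofReal (r ^ (d-1)) ∂volume
      ≤ ∫⁻ _ in Set.Ioo (0:ℝ) 1, 1 ∂volume := by
    apply lintegral_mono_ae
    rw [ae_restrict_iff' measurableSet_Ioo]
    apply ae_of_all
    intro r hr
    have h1 : r ^ (d-1) ≤ 1 := pow_le_one₀ hr.1.le hr.2.le
    calc ENNReal.ofReal (r ^ (d-1)) ≤ ENNReal.ofReal 1 := ENNReal.ofReal_le_ofReal h1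
      _ = 1 := ENNReal.ofReal_one
  apply lt_of_le_of_lt hle
  rw [setLIntegral_one, Real.volume_Ioo]
  norm_num

lemma eta_integrable (d : ℕ) (η : ℝ → ℂ) (hη : MemLp η 2 (radialMeasure d)) :
    Integrable (fun r : ℝ => (ENNReal.ofReal (r ^ (d-1))).toReal • η r)
      (volume.restrict (Set.Ioo (0:ℝ) 1)) := by
  have : IsFiniteMeasure (radialMeasure d) := radial_finite d
  have h1 : MemLp η 1 (radialMeasure d) := hη.mono_exponent (by norm_num)
  have h2 : Integrable η (radialMeasure d) := memLp_one_iff_integrable.mp h1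
  rw [radialMeasure] at h2
  exact (integrable_withDensity_iff_integrable_smul'
    (by measurability) (ae_of_all _ fun x => ENNReal.ofReal_lt_top)).mp h2

lemma jacobiP_bound (d k : ℕ) (r : ℝ) (hr : r ∈ Set.Ioo (0:ℝ) 1) :
    |jacobiP d k r| ≤ Real.sqrt (2*k+d) *
      ∑ q ∈ Finset.range (k+1), (Nat.choose k q : ℝ) * (Nat.choose (k + q + d - 1) k : ℝ) := by
  rw [jacobiP, abs_mul, abs_of_nonneg (Real.sqrt_nonneg _)]
  apply mul_le_mul_of_nonneg_left _ (Real.sqrt_nonneg _)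
  calc |∑ q ∈ Finset.range (k+1), (-1:ℝ)^q * (k.choose q) * ((k+q+d-1).choose k) * r^q|
      ≤ ∑ q ∈ Finset.range (k+1), |(-1:ℝ)^q * (k.choose q) * ((k+q+d-1).choose k) * r^q| :=
        Finset.abs_sum_le_sum_abs _ _
    _ ≤ ∑ q ∈ Finset.range (k+1), (k.choose q : ℝ) * ((k+q+d-1).choose k) := by
        apply Finset.sum_le_sum
        intro q _
        rw [abs_mul, abs_mul, abs_mul, abs_pow, abs_pow, abs_neg, abs_one, one_pow, one_mul,
          Nat.abs_cast, Nat.abs_cast, abs_of_nonneg hr.1.le]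
        calc (k.choose q : ℝ) * ((k+q+d-1).choose k) * r^q
            ≤ (k.choose q : ℝ) * ((k+q+d-1).choose k) * 1 := by
              apply mul_le_mul_of_nonneg_left (pow_le_one₀ hr.1.le hr.2.le) (by positivity)
          _ = (k.choose q : ℝ) * ((k+q+d-1).choose k) := mul_one _
    _ = _ := rfl

lemma intk (d : ℕ) (η : ℝ → ℂ) (hη : MemLp η 2 (radialMeasure d)) (k : ℕ) :
    Integrable (fun r : ℝ => η r * (jacobiP d k r : ℂ) * (r : ℂ) ^ (d-1))
      (volume.restrict (Set.Ioo (0:ℝ) 1)) := by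
  set g : ℝ → ℂ := fun r => (ENNReal.ofReal (r ^ (d-1))).toReal • η r with hg
  have hgI : Integrable g (volume.restrict (Set.Ioo (0:ℝ) 1)) := eta_integrable d η hη
  have hcont : Continuous (fun r : ℝ => (jacobiP d k r : ℂ)) := by
    apply Complex.continuous_ofReal.comp
    unfold jacobiP
    exact continuous_const.mul (continuous_finset_sum _ fun q _ =>
      (continuous_const.mul (continuous_pow q)))
  set C : ℝ := Real.sqrt (2*k+d) *
      ∑ q ∈ Finset.range (k+1), (Nat.choose k q : ℝ) * (Nat.choose (k + q + d - 1) k : ℝ) with hC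
  have hFI : Integrable (fun r : ℝ => (jacobiP d k r : ℂ) * g r)
      (volume.restrict (Set.Ioo (0:ℝ) 1)) := by
    apply Integrable.mono' (hgI.norm.const_mul C)
      (hcont.aestronglyMeasurable.mul hgI.aestronglyMeasurable)
    rw [ae_restrict_iff' measurableSet_Ioo]
    apply ae_of_all
    intro r hr
    simp only [Pi.mul_apply]
    rw [norm_mul]
    apply mul_le_mul_of_nonneg_right _ (norm_nonneg _)
    rw [Complex.norm_real]
    exact (jacobiP_bound d k r hr).trans le_rfl
  apply hFI.congr
  rw [Filter.eventuallyEq_iff_exists_mem]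
  refine ⟨Set.Ioo 0 1, (ae_restrict_iff' measurableSet_Ioo).2 (ae_of_all _ fun r hr => hr), ?_⟩
  intro r hr
  simp only [hg]
  rw [ENNReal.toReal_ofReal (pow_nonneg hr.1.le _)]
  rw [Complex.real_smul]
  push_cast
  ring

/-- The eigenvalue formula: for `η ∈ L²((0,1), r^{d-1}dr)`,
`λ_ℓ(η) = ∑_{k=0}^{2ℓ-2} (-1)^{k+1} a_k(η) √(2k+d)/ℓ ·
  (2ℓ-2+d)!(2ℓ-2)!/((2ℓ-2+d+k)!(2ℓ-2-k)!)`
equals `-((2ℓ+d-2)/ℓ) ∫_0^1 η(r) r^{2ℓ-2} r^{d-1} dr`. -/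
theorem eigenvalue_formula (d : ℕ) (hd : 2 ≤ d) (η : ℝ → ℂ)
    (hη : MemLp η 2 (radialMeasure d)) (ℓ : ℕ) (hℓ : 1 ≤ ℓ) :
    ∑ k ∈ Finset.range (2 * ℓ - 1),
        (-1 : ℂ) ^ (k + 1) * jacobiCoeff d η k *
          ((Real.sqrt (2 * k + d) : ℂ) / ℓ) *
            ((((2 * ℓ - 2 + d).factorial : ℂ) * ((2 * ℓ - 2).factorial : ℂ)) /
              (((2 * ℓ - 2 + d + k).factorial : ℂ) * ((2 * ℓ - 2 - k).factorial : ℂ))) =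
      -(((2 * ℓ + d - 2 : ℕ) : ℂ) / ℓ) *
        ∫ r in Set.Ioo (0:ℝ) 1, η r * (r : ℂ) ^ (2 * ℓ - 2) * (r : ℂ) ^ (d - 1) := by
  have step1 : ∀ k ∈ Finset.range (2*ℓ-1),
      (-1 : ℂ) ^ (k + 1) * jacobiCoeff d η k *
          ((Real.sqrt (2 * k + d) : ℂ) / ℓ) *
            ((((2 * ℓ - 2 + d).factorial : ℂ) * ((2 * ℓ - 2).factorial : ℂ)) /
              (((2 * ℓ - 2 + d + k).factorial : ℂ) * ((2 * ℓ - 2 - k).factorial : ℂ)))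
      = ∫ r in Set.Ioo (0:ℝ) 1,
          ((-1 : ℂ) ^ (k + 1) * ((Real.sqrt (2 * k + d) : ℂ) / ℓ) *
            ((((2 * ℓ - 2 + d).factorial : ℂ) * ((2 * ℓ - 2).factorial : ℂ)) /
              (((2 * ℓ - 2 + d + k).factorial : ℂ) * ((2 * ℓ - 2 - k).factorial : ℂ)))) *
            (η r * (jacobiP d k r : ℂ) * (r : ℂ) ^ (d - 1)) := by
    intro k _
    rw [MeasureTheory.integral_const_mul, jacobiCoeff]
    ring
  rw [Finset.sum_congr rfl step1,
    ← MeasureTheory.integral_finset_sum _ (fun k _ => ((intk d η hη k).const_mul _))]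
  have hpt : (fun r : ℝ => ∑ k ∈ Finset.range (2*ℓ-1),
      ((-1 : ℂ) ^ (k + 1) * ((Real.sqrt (2 * k + d) : ℂ) / ℓ) *
            ((((2 * ℓ - 2 + d).factorial : ℂ) * ((2 * ℓ - 2).factorial : ℂ)) /
              (((2 * ℓ - 2 + d + k).factorial : ℂ) * ((2 * ℓ - 2 - k).factorial : ℂ)))) *
            (η r * (jacobiP d k r : ℂ) * (r : ℂ) ^ (d - 1)))
      = fun r : ℝ => (-(((2 * ℓ + d - 2 : ℕ) : ℂ) / (ℓ : ℂ))) *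
          (η r * (r : ℂ) ^ (2 * ℓ - 2) * (r : ℂ) ^ (d - 1)) := by
    funext r
    have hre := jacobi_sum d hd ℓ hℓ r
    have hre' : (∑ k ∈ Finset.range (2*ℓ-1), ((-1:ℂ)^(k+1) * ((Real.sqrt (2*k+d) : ℝ) : ℂ) *
        ((((2*ℓ-2+d).factorial : ℂ) * ((2*ℓ-2).factorial : ℂ)) /
          (((2*ℓ-2+d+k).factorial : ℂ) * ((2*ℓ-2-k).factorial : ℂ)))) *
        ((jacobiP d k r : ℝ) : ℂ))
        = -(((2*ℓ+d-2 : ℕ) : ℂ)) * ((r:ℂ))^(2*ℓ-2) := by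
      have := congrArg (fun x : ℝ => (x : ℂ)) hre
      push_cast at this ⊢
      convert this using 2
    calc ∑ k ∈ Finset.range (2*ℓ-1),
        ((-1 : ℂ) ^ (k + 1) * ((Real.sqrt (2 * k + d) : ℂ) / ℓ) *
            ((((2 * ℓ - 2 + d).factorial : ℂ) * ((2 * ℓ - 2).factorial : ℂ)) /
              (((2 * ℓ - 2 + d + k).factorial : ℂ) * ((2 * ℓ - 2 - k).factorial : ℂ)))) *
            (η r * (jacobiP d k r : ℂ) * (r : ℂ) ^ (d - 1))
        = (η r * (r : ℂ) ^ (d-1) / (ℓ : ℂ)) * ∑ k ∈ Finset.range (2*ℓ-1),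
          ((-1:ℂ)^(k+1) * ((Real.sqrt (2*k+d) : ℝ) : ℂ) *
          ((((2*ℓ-2+d).factorial : ℂ) * ((2*ℓ-2).factorial : ℂ)) /
            (((2*ℓ-2+d+k).factorial : ℂ) * ((2*ℓ-2-k).factorial : ℂ)))) *
          ((jacobiP d k r : ℝ) : ℂ) := by
          rw [Finset.mul_sum]
          exact Finset.sum_congr rfl fun k _ => by ring
      _ = (η r * (r : ℂ) ^ (d-1) / (ℓ : ℂ)) *
            (-(((2*ℓ+d-2 : ℕ) : ℂ)) * ((r:ℂ))^(2*ℓ-2)) := by rw [hre']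
      _ = (-(((2 * ℓ + d - 2 : ℕ) : ℂ) / (ℓ : ℂ))) *
          (η r * (r : ℂ) ^ (2 * ℓ - 2) * (r : ℂ) ^ (d - 1)) := by ring
  rw [hpt, MeasureTheory.integral_const_mul]
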